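/- Let A ∈ ℝ^{n×n} be invertible and BK ∈ ℝ^{n×n}. For δ ∈ (0,1) define g^δ(s) = ((e^{sA} − I)/δ − (1/2)A)(I − A^{−1}BK). Then for every r ∈ (0, δ], |∫_0^r g^δ(s) ds| ≤ ((r²/6)|A|² e^{|A|} + (1/2)|r − δ| |A|) · |I − A^{−1}BK|. In particular, |∫_0^δ g^δ(s) ds| ≤ (δ²/6)|A|² e^{|A|} |I − A^{−1}BK|. -/

import Mathlib

set_option maxHeartbeats 1000000
set_option synthInstance.maxHeartbeats 400000

noncomputable section

abbrev Euc (n : ℕ) := EuclideanSpace ℝ (Fin n)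
abbrev Mat (n : ℕ) := Euc n →L[ℝ] Euc n

open NormedSpace Nat in
lemma exp_taylor2 {𝔸 : Type*} [NormedRing 𝔸] [NormedAlgebra ℝ 𝔸] [CompleteSpace 𝔸] (x : 𝔸) :
    ‖NormedSpace.exp x - 1 - x‖ ≤ ‖x‖ ^ 2 / 2 * Real.exp ‖x‖ := by
  set f : ℕ → 𝔸 := fun n => ((n ! : ℝ))⁻¹ • x ^ n with hf
  have hsumm : Summable f := expSeries_summable' (𝕂 := ℝ) x
  have h2 := Summable.sum_add_tsum_nat_add 2 hsumm
  have hexp : NormedSpace.exp x = ∑' n, f n := by rw [exp_eq_tsum ℝ]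
  have hrem : NormedSpace.exp x - 1 - x = ∑' n, f (n + 2) := by
    rw [hexp, ← h2]
    simp [hf, Finset.sum_range_succ, Nat.factorial]
    abel
  rw [hrem]
  have hnorm : Summable fun n => ‖f (n + 2)‖ :=
    (summable_nat_add_iff 2).2 (norm_expSeries_summable' (𝕂 := ℝ) x)
  have hRHSsumm : Summable fun n : ℕ => ‖x‖ ^ 2 / 2 * (‖x‖ ^ n / n !) :=
    (Real.summable_pow_div_factorial ‖x‖).mul_left _
  calc ‖∑' n, f (n + 2)‖ ≤ ∑' n, ‖f (n + 2)‖ := norm_tsum_le_tsum_norm hnorm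
    _ ≤ ∑' n : ℕ, ‖x‖ ^ 2 / 2 * (‖x‖ ^ n / n !) := by
        refine Summable.tsum_le_tsum (fun n => ?_) hnorm hRHSsumm
        have hne : (n ! : ℝ) ≠ 0 := by positivity
        have h1 : ‖f (n + 2)‖ ≤ (((n + 2)! : ℝ))⁻¹ * ‖x‖ ^ (n + 2) := by
          rw [hf, norm_smul, Real.norm_eq_abs, abs_of_nonneg (by positivity)]
          exact mul_le_mul_of_nonneg_left (norm_pow_le' x (by omega)) (by positivity)
        refine h1.trans ?_
        have hfact : (2 : ℝ) * n ! ≤ ((n + 2)! : ℝ) := by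
          have : 2 * n ! ≤ (n + 2)! := by
            rw [show n + 2 = (n + 1) + 1 from rfl, Nat.factorial_succ, Nat.factorial_succ]
            calc 2 * n ! ≤ (n + 1 + 1) * n ! := Nat.mul_le_mul_right _ (by omega)
              _ ≤ (n + 1 + 1) * ((n + 1) * n !) :=
                  Nat.mul_le_mul_left _ (Nat.le_mul_of_pos_left _ n.succ_pos)
          exact_mod_cast this
        have hinv : (((n + 2)! : ℝ))⁻¹ ≤ ((2 : ℝ) * n !)⁻¹ :=
          inv_anti₀ (by positivity) hfact
        calc (((n + 2)! : ℝ))⁻¹ * ‖x‖ ^ (n + 2)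
            ≤ ((2 : ℝ) * n !)⁻¹ * ‖x‖ ^ (n + 2) :=
              mul_le_mul_of_nonneg_right hinv (by positivity)
          _ = ‖x‖ ^ 2 / 2 * (‖x‖ ^ n / n !) := by
              rw [pow_add]; field_simp
    _ = ‖x‖ ^ 2 / 2 * Real.exp ‖x‖ := by
        rw [tsum_mul_left, Real.exp_eq_exp_ℝ, exp_eq_tsum_div]

theorem g_delta_integral_bound {n : ℕ} (A BK : Mat n) (hA : IsUnit A)
    (δ : ℝ) (hδ : δ ∈ Set.Ioo (0:ℝ) 1) :
    (∀ r ∈ Set.Ioc (0:ℝ) δ,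
      ‖∫ s in (0:ℝ)..r,
          (δ⁻¹ • (NormedSpace.exp (s • A) - 1) - (2:ℝ)⁻¹ • A) * (1 - Ring.inverse A * BK)‖ ≤
        (r ^ 2 / 6 * ‖A‖ ^ 2 * Real.exp ‖A‖ + 1 / 2 * |r - δ| * ‖A‖) *
          ‖1 - Ring.inverse A * BK‖) ∧
    ‖∫ s in (0:ℝ)..δ,
        (δ⁻¹ • (NormedSpace.exp (s • A) - 1) - (2:ℝ)⁻¹ • A) * (1 - Ring.inverse A * BK)‖ ≤
      δ ^ 2 / 6 * ‖A‖ ^ 2 * Real.exp ‖A‖ * ‖1 - Ring.inverse A * BK‖ := by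
  obtain ⟨hδ0, hδ1⟩ := hδ
  set M : Mat n := 1 - Ring.inverse A * BK with hM
  have key : ∀ r ∈ Set.Ioc (0:ℝ) δ,
      ‖∫ s in (0:ℝ)..r,
          (δ⁻¹ • (NormedSpace.exp (s • A) - 1) - (2:ℝ)⁻¹ • A) * M‖ ≤
        (r ^ 2 / 6 * ‖A‖ ^ 2 * Real.exp ‖A‖ + 1 / 2 * |r - δ| * ‖A‖) * ‖M‖ := by
    intro r hr
    obtain ⟨hr0, hrδ⟩ := hr
    have hcontE : Continuous fun s : ℝ => (NormedSpace.exp (s • A) - 1 - s • A) * M := by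
      apply Continuous.mul _ continuous_const
      exact (((continuous_iff_continuousAt.2 fun x =>
        (NormedSpace.exp_analytic (𝕂 := ℝ) x).continuousAt).comp (continuous_id.smul continuous_const)).sub
        continuous_const).sub (continuous_id.smul continuous_const)
    have hsplit : ∀ s : ℝ,
        (δ⁻¹ • (NormedSpace.exp (s • A) - 1) - (2:ℝ)⁻¹ • A) * M
          = δ⁻¹ • ((NormedSpace.exp (s • A) - 1 - s • A) * M) + (s / δ - 1 / 2) • (A * M) := by
      intro s
      set X := NormedSpace.exp (s • A) - 1 with hX
      have hsm : ∀ (c : ℝ) (a b : Mat n), (c • a) * b = c • (a * b) := fun c a b =>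
        ContinuousLinearMap.smul_comp c a b
      have h1 : (X - s • A) * M = X * M - s • (A * M) := by
        rw [sub_mul, hsm]
      have hc : δ⁻¹ * s - (s / δ - 1 / 2) = (2:ℝ)⁻¹ := by
        field_simp; ring
      have h2 : (2:ℝ)⁻¹ • (A * M) = (δ⁻¹ * s) • (A * M) - (s / δ - 1 / 2) • (A * M) := by
        have := sub_smul (δ⁻¹ * s) (s / δ - 1 / 2) (A * M)
        rw [hc] at this
        exact this
      rw [sub_mul, hsm, hsm, h1, smul_sub, smul_smul, h2]
      abel
    have hI1 : IntervalIntegrable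
        (fun s => δ⁻¹ • ((NormedSpace.exp (s • A) - 1 - s • A) * M)) MeasureTheory.volume 0 r :=
      (hcontE.const_smul δ⁻¹ :
        Continuous fun s => δ⁻¹ • ((NormedSpace.exp (s • A) - 1 - s • A) * M)).intervalIntegrable 0 r
    have hI2 : IntervalIntegrable
        (fun s : ℝ => (s / δ - 1 / 2) • (A * M)) MeasureTheory.volume 0 r := by
      apply Continuous.intervalIntegrable
      exact (((continuous_id.div_const δ).sub continuous_const).smul continuous_const)
    have hlin : (∫ s in (0:ℝ)..r, (s / δ - 1 / 2)) = r ^ 2 / (2 * δ) - r / 2 := by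
      rw [intervalIntegral.integral_sub (Continuous.intervalIntegrable (by fun_prop) 0 r)
          intervalIntegrable_const, intervalIntegral.integral_div, integral_id,
          intervalIntegral.integral_const]
      simp [smul_eq_mul]
      ring
    have hintsplit : (∫ s in (0:ℝ)..r,
        (δ⁻¹ • (NormedSpace.exp (s • A) - 1) - (2:ℝ)⁻¹ • A) * M)
          = δ⁻¹ • (∫ s in (0:ℝ)..r, (NormedSpace.exp (s • A) - 1 - s • A) * M)
            + (r ^ 2 / (2 * δ) - r / 2) • (A * M) := by
      simp_rw [hsplit]
      rw [intervalIntegral.integral_add hI1 hI2, intervalIntegral.integral_smul,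
        intervalIntegral.integral_smul_const, hlin]
    rw [hintsplit]
    -- bound on E integral
    have hE : ‖∫ s in (0:ℝ)..r, (NormedSpace.exp (s • A) - 1 - s • A) * M‖ ≤
        r ^ 3 / 6 * ‖A‖ ^ 2 * Real.exp ‖A‖ * ‖M‖ := by
      have hb : ∀ t ∈ Set.Ioc (0:ℝ) r,
          ‖(NormedSpace.exp (t • A) - 1 - t • A) * M‖ ≤
            (‖A‖ ^ 2 * Real.exp ‖A‖ * ‖M‖ / 2) * t ^ 2 := by
        intro t ht
        obtain ⟨ht0, htr⟩ := ht
        calc ‖(NormedSpace.exp (t • A) - 1 - t • A) * M‖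
            ≤ ‖NormedSpace.exp (t • A) - 1 - t • A‖ * ‖M‖ := norm_mul_le _ _
          _ ≤ (‖t • A‖ ^ 2 / 2 * Real.exp ‖t • A‖) * ‖M‖ :=
              mul_le_mul_of_nonneg_right (exp_taylor2 _) (norm_nonneg M)
          _ ≤ (‖A‖ ^ 2 * Real.exp ‖A‖ * ‖M‖ / 2) * t ^ 2 := by
              have hn : ‖t • A‖ = t * ‖A‖ := by
                rw [norm_smul t A, Real.norm_eq_abs, abs_of_pos ht0]
              rw [hn]
              have ht1 : t ≤ 1 := htr.trans (hrδ.trans hδ1.le)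
              have hexp : Real.exp (t * ‖A‖) ≤ Real.exp ‖A‖ :=
                Real.exp_le_exp.2 (by nlinarith [norm_nonneg A])
              have h1 : (t * ‖A‖) ^ 2 / 2 * Real.exp (t * ‖A‖) ≤
                  (t * ‖A‖) ^ 2 / 2 * Real.exp ‖A‖ :=
                mul_le_mul_of_nonneg_left hexp (by positivity)
              calc (t * ‖A‖) ^ 2 / 2 * Real.exp (t * ‖A‖) * ‖M‖
                  ≤ (t * ‖A‖) ^ 2 / 2 * Real.exp ‖A‖ * ‖M‖ :=
                    mul_le_mul_of_nonneg_right h1 (norm_nonneg M)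
                _ = (‖A‖ ^ 2 * Real.exp ‖A‖ * ‖M‖ / 2) * t ^ 2 := by ring
      have hIb : IntervalIntegrable
          (fun t : ℝ => (‖A‖ ^ 2 * Real.exp ‖A‖ * ‖M‖ / 2) * t ^ 2) MeasureTheory.volume 0 r :=
        Continuous.intervalIntegrable (by fun_prop) 0 r
      have hmain := intervalIntegral.norm_integral_le_of_norm_le (μ := MeasureTheory.volume)
        (a := (0:ℝ)) (b := r)
        (f := fun s => (NormedSpace.exp (s • A) - 1 - s • A) * M)
        (g := fun t => (‖A‖ ^ 2 * Real.exp ‖A‖ * ‖M‖ / 2) * t ^ 2) hr0.le ?_ hIb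
      · refine hmain.trans ?_
        have hval : (∫ t in (0:ℝ)..r, (‖A‖ ^ 2 * Real.exp ‖A‖ * ‖M‖ / 2) * t ^ 2)
            = (‖A‖ ^ 2 * Real.exp ‖A‖ * ‖M‖ / 2) * (r ^ 3 / 3) := by
          rw [intervalIntegral.integral_const_mul, integral_pow]
          norm_num
        rw [hval]
        apply le_of_eq
        ring
      · exact MeasureTheory.ae_of_all _ hb
    have hcoef : |r ^ 2 / (2 * δ) - r / 2| ≤ |r - δ| / 2 := by
      have habs : |r - δ| = δ - r := by rw [abs_of_nonpos (by linarith)]; ring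
      have h0 : r ^ 2 / (2 * δ) - r / 2 ≤ 0 := by
        rw [sub_nonpos, div_le_div_iff₀ (by positivity) (by norm_num)]
        nlinarith
      rw [abs_of_nonpos h0, habs, neg_sub]
      have heq : r / 2 - r ^ 2 / (2 * δ) = (r * (δ - r)) / (2 * δ) := by
        field_simp
      rw [heq, div_le_div_iff₀ (by positivity) (by norm_num)]
      nlinarith [sq_nonneg (δ - r)]
    calc ‖δ⁻¹ • (∫ s in (0:ℝ)..r, (NormedSpace.exp (s • A) - 1 - s • A) * M)
            + (r ^ 2 / (2 * δ) - r / 2) • (A * M)‖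
        ≤ ‖δ⁻¹ • (∫ s in (0:ℝ)..r, (NormedSpace.exp (s • A) - 1 - s • A) * M)‖
            + ‖(r ^ 2 / (2 * δ) - r / 2) • (A * M)‖ := norm_add_le _ _
      _ ≤ δ⁻¹ * (r ^ 3 / 6 * ‖A‖ ^ 2 * Real.exp ‖A‖ * ‖M‖)
            + (|r - δ| / 2) * (‖A‖ * ‖M‖) := by
          gcongr ?_ + ?_
          · have hn := norm_smul δ⁻¹ (∫ s in (0:ℝ)..r, (NormedSpace.exp (s • A) - 1 - s • A) * M)
            rw [hn, Real.norm_eq_abs, abs_of_pos (by positivity)]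
            exact mul_le_mul_of_nonneg_left hE (by positivity)
          · have hn := norm_smul (r ^ 2 / (2 * δ) - r / 2) (A * M)
            rw [hn, Real.norm_eq_abs]
            exact mul_le_mul hcoef (norm_mul_le A M) (norm_nonneg _) (by positivity)
      _ = (δ⁻¹ * r ^ 3) / 6 * (‖A‖ ^ 2 * Real.exp ‖A‖ * ‖M‖)
            + 1 / 2 * |r - δ| * ‖A‖ * ‖M‖ := by ring
      _ ≤ r ^ 2 / 6 * (‖A‖ ^ 2 * Real.exp ‖A‖ * ‖M‖) + 1 / 2 * |r - δ| * ‖A‖ * ‖M‖ := by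
          have h3 : δ⁻¹ * r ^ 3 ≤ r ^ 2 := by
            rw [inv_mul_le_iff₀ hδ0]
            nlinarith
          gcongr
      _ = (r ^ 2 / 6 * ‖A‖ ^ 2 * Real.exp ‖A‖ + 1 / 2 * |r - δ| * ‖A‖) * ‖M‖ := by ring
  refine ⟨key, ?_⟩
  have h := key δ ⟨hδ0, le_refl δ⟩
  simpa using h

end
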